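/- There exists an absolute constant c′ ∈ (0,1) such that for all integers 1 ≤ r ≤ k ≤ c′·p₁ with r ≤ p₂ and every ε > 0, there exists a finite set 𝕏′ of real p₁×p₂ matrices with the following properties: (i) every X ∈ 𝕏′ has at most k nonzero rows, rank(X) ≤ r, and ‖X‖_F = ε; (ii) log|𝕏′| ≥ (4/25)·k·log(p₁/k) + (3/25)·r·p₂; (iii) ‖X₁ − X₂‖_F ≥ ε/2 for all distinct X₁, X₂ ∈ 𝕏′. -/

import Mathlib

noncomputable section
open MeasureTheory

/-- Frobenius norm of a real matrix. -/
def frobNorm {a b : ℕ} (X : Matrix (Fin a) (Fin b) ℝ) : ℝ :=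
  Real.sqrt (∑ i, ∑ j, (X i j) ^ 2)

/-- Euclidean norm of a vector. -/
def l2Norm {n : ℕ} (v : Fin n → ℝ) : ℝ :=
  Real.sqrt (∑ i, (v i) ^ 2)

/-- Sum of Euclidean norms of the rows (ℓ_{1,2} norm). -/
def l12Norm {a b : ℕ} (X : Matrix (Fin a) (Fin b) ℝ) : ℝ :=
  ∑ i, Real.sqrt (∑ j, (X i j) ^ 2)

/-- Nuclear norm: sum of the singular values of `X`. -/
def nuclearNorm {a b : ℕ} (X : Matrix (Fin a) (Fin b) ℝ) : ℝ :=
  ∑ i, Real.sqrt ((show (X.transpose * X).IsHermitian by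
    simpa [Matrix.conjTranspose_eq_transpose_of_trivial] using
      Matrix.isHermitian_conjTranspose_mul_self X).eigenvalues i)

/-- Spectral norm (ℓ₂ operator norm). -/
def specNorm {a b : ℕ} (X : Matrix (Fin a) (Fin b) ℝ) : ℝ :=
  sSup ((fun v => l2Norm (X.mulVec v)) '' {v | l2Norm v ≤ 1})

/-- Number of nonzero rows. -/
def rowSparsity {a b : ℕ} (X : Matrix (Fin a) (Fin b) ℝ) : ℕ :=
  {i | X i ≠ 0}.ncard

/-- The set 𝕏_{k,r} of matrices with at most `k` nonzero rows and rank at most `r`. -/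
def sparseLowRank (p₁ p₂ k r : ℕ) : Set (Matrix (Fin p₁) (Fin p₂) ℝ) :=
  {X | rowSparsity X ≤ k ∧ X.rank ≤ r}

/-- Gaussian measure on ℝⁿ with mean `μ` and covariance `σ² Iₙ`. -/
def gaussianPi (n : ℕ) (μ : Fin n → ℝ) (σ : ℝ) : Measure (Fin n → ℝ) :=
  Measure.pi fun i => ProbabilityTheory.gaussianReal (μ i) (Real.toNNReal (σ ^ 2))

open Finset

/-- Greedy packing lemma. -/
lemma greedy_aux {α : Type*} [DecidableEq α] (R : α → α → Prop) [DecidableRel R]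
    (hsym : ∀ x y, R x y → R y x) (B : ℕ) :
    ∀ n : ℕ, ∀ Ω : Finset α, Ω.card ≤ n → (∀ x ∈ Ω, R x x) →
    (∀ x ∈ Ω, (Ω.filter (R x)).card ≤ B) →
    ∃ C : Finset α, C ⊆ Ω ∧ Ω.card ≤ B * C.card ∧ ∀ x ∈ C, ∀ y ∈ C, x ≠ y → ¬ R x y := by
  intro n
  induction n with
  | zero =>
    intro Ω hcard _ _
    exact ⟨∅, by simp, by simpa using hcard, by simp⟩
  | succ n ih =>
    intro Ω hcard hrefl hball
    rcases Ω.eq_empty_or_nonempty with h | ⟨x, hx⟩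
    · exact ⟨∅, by simp [h], by simp [h], by simp⟩
    · set Ω' := Ω.filter (fun y => ¬ R x y) with hΩ'
      have hss : Ω' ⊆ Ω := filter_subset _ _
      have hxnot : x ∉ Ω' := by simp [hΩ', hrefl x hx]
      have hlt : Ω'.card < Ω.card := card_lt_card ⟨hss, fun h => hxnot (h hx)⟩
      obtain ⟨C, hCss, hCcard, hCpair⟩ := ih Ω' (by omega)
        (fun y hy => hrefl y (hss hy))
        (fun y hy => le_trans (card_le_card (filter_subset_filter _ hss)) (hball y (hss hy)))
      refine ⟨insert x C, ?_, ?_, ?_⟩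
      · exact insert_subset hx (hCss.trans hss)
      · have hxC : x ∉ C := fun h => hxnot (hCss h)
        have hsplit : (Ω.filter (R x)).card + Ω'.card = Ω.card := by
          rw [hΩ']
          exact card_filter_add_card_filter_not _
        have h1 : (Ω.filter (R x)).card ≤ B := hball x hx
        rw [card_insert_of_notMem hxC]
        calc Ω.card = (Ω.filter (R x)).card + Ω'.card := hsplit.symm
          _ ≤ B + B * C.card := Nat.add_le_add h1 hCcard
          _ = B * (C.card + 1) := by ring
      · intro a ha b hb hab
        rcases mem_insert.mp ha with rfl | ha'
        · have hb' : b ∈ C := by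
            rcases mem_insert.mp hb with rfl | h
            · exact absurd rfl hab
            · exact h
          have := hCss hb'
          simp only [hΩ', mem_filter] at this
          exact fun h => this.2 h
        · rcases mem_insert.mp hb with rfl | hb'
          · have := hCss ha'
            simp only [hΩ', mem_filter] at this
            exact fun h => this.2 (hsym _ _ h)
          · exact hCpair a ha' b hb' hab

open Finset

/-- `choose n` is monotone below the half. -/
lemma choose_mono_below {n j t : ℕ} (hjt : j ≤ t) (ht : 2 * t ≤ n) :
    n.choose j ≤ n.choose t := by
  induction t with
  | zero => simpa [Nat.le_zero.mp hjt]
  | succ t iht =>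
    rcases Nat.lt_or_ge j (t+1) with h | h
    · have step : n.choose t ≤ n.choose (t+1) := by
        have hrec := Nat.choose_succ_right_eq n t
        have h1 : n.choose t * (t+1) ≤ n.choose t * (n - t) :=
          Nat.mul_le_mul_left _ (by omega)
        have h2 : n.choose (t+1) * (t+1) = n.choose t * (n - t) := hrec
        have := h2 ▸ h1
        exact Nat.le_of_mul_le_mul_right this (by omega)
      exact le_trans (iht (by omega) (by omega)) step
    · have : j = t + 1 := by omega
      simp [this]

/-- ratio bound: `C(n,j) (n-k+1)^(k-j) ≤ C(n,k) k^(k-j)` for `j ≤ k ≤ n`. -/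
lemma choose_ratio {n k : ℕ} (hkn : k ≤ n) :
    ∀ d j, j + d = k → n.choose j * (n - k + 1)^d ≤ n.choose k * k^d := by
  intro d
  induction d with
  | zero => intro j hj; simp [show j = k by omega]
  | succ d ihd =>
    intro j hj
    have hstep : n.choose j * (n - k + 1) ≤ n.choose (j+1) * k := by
      have h1 : n.choose j * (n - k + 1) ≤ n.choose j * (n - j) :=
        Nat.mul_le_mul_left _ (by omega)
      have h2 : n.choose (j+1) * (j+1) = n.choose j * (n - j) := Nat.choose_succ_right_eq n j
      have h3 : n.choose (j+1) * (j+1) ≤ n.choose (j+1) * k :=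
        Nat.mul_le_mul_left _ (by omega)
      omega
    calc n.choose j * (n - k + 1)^(d+1)
        = (n.choose j * (n - k + 1)) * (n - k + 1)^d := by ring
      _ ≤ (n.choose (j+1) * k) * (n - k + 1)^d := Nat.mul_le_mul_right _ hstep
      _ = (n.choose (j+1) * (n - k + 1)^d) * k := by ring
      _ ≤ (n.choose k * k^d) * k := Nat.mul_le_mul_right _ (ihd (j+1) (by omega))
      _ = n.choose k * k^(d+1) := by ring

/-- Counting subsets of card ≤ t. -/
lemma card_powerset_filter_le {β : Type*} [DecidableEq β] (M : Finset β) (t : ℕ)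
    (ht : 2 * t ≤ M.card) :
    (M.powerset.filter (fun T => T.card ≤ t)).card ≤ (t+1) * M.card.choose t := by
  have hsub : M.powerset.filter (fun T => T.card ≤ t) ⊆
      (range (t+1)).biUnion (fun j => M.powersetCard j) := by
    intro T hT
    simp only [mem_filter, mem_powerset] at hT
    simp only [mem_biUnion, mem_range, mem_powersetCard]
    exact ⟨T.card, by omega, hT.1, rfl⟩
  calc (M.powerset.filter (fun T => T.card ≤ t)).card
      ≤ ((range (t+1)).biUnion (fun j => M.powersetCard j)).card := card_le_card hsub
    _ ≤ ∑ j ∈ range (t+1), (M.powersetCard j).card := card_biUnion_le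
    _ = ∑ j ∈ range (t+1), M.card.choose j := by simp [card_powersetCard]
    _ ≤ ∑ j ∈ range (t+1), M.card.choose t := by
        refine sum_le_sum (fun j hj => ?_)
        exact choose_mono_below (by simp at hj; omega) ht
    _ = (t+1) * M.card.choose t := by simp [mul_comm]

/-- real binomial bound `C(m,t) ≤ 8^t (9/8)^m` for `t ≤ m`. -/
lemma choose_real_bound {m t : ℕ} (htm : t ≤ m) :
    (m.choose t : ℝ) ≤ 8^t * (9/8)^m := by
  have hexp : ((1:ℝ)/8 + 1)^m = ∑ j ∈ range (m+1), (1/8:ℝ)^j * 1^(m-j) * m.choose j :=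
    add_pow (1/8 : ℝ) 1 m
  have hterm : (1/8:ℝ)^t * 1^(m-t) * m.choose t ≤ ((1:ℝ)/8 + 1)^m := by
    rw [hexp]
    refine single_le_sum (f := fun j => (1/8:ℝ)^j * 1^(m-j) * m.choose j) ?_ ?_
    · intro i _; positivity
    · simp [Nat.lt_succ_iff, htm]
  have h98 : ((1:ℝ)/8 + 1) = 9/8 := by norm_num
  rw [h98] at hterm
  simp only [one_pow, mul_one] at hterm
  have h8t : (0:ℝ) < (1/8)^t := by positivity
  calc (m.choose t : ℝ) = ((1/8:ℝ)^t * m.choose t) * 8^t := by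
        rw [div_pow]; field_simp; rw [one_pow, mul_one]
    _ ≤ (9/8)^m * 8^t := by
        refine mul_le_mul_of_nonneg_right ?_ (by positivity)
        exact hterm
    _ = 8^t * (9/8)^m := by ring

open Finset

section codes
variable {r p₂ : ℕ}

/-- Hamming distance between two boolean matrices. -/
def hamm (c₁ c₂ : Fin r → Fin p₂ → Bool) : ℕ :=
  (univ.filter (fun x : Fin r × Fin p₂ => ¬ (c₁ x.1 x.2 = c₂ x.1 x.2))).card

lemma hamm_comm (c₁ c₂ : Fin r → Fin p₂ → Bool) : hamm c₁ c₂ = hamm c₂ c₁ := by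
  unfold hamm
  congr 1
  apply filter_congr
  intro x _
  simp [eq_comm]

lemma hamm_self (c : Fin r → Fin p₂ → Bool) : hamm c c = 0 := by
  simp [hamm]

lemma hamm_eq_sum (c₁ c₂ : Fin r → Fin p₂ → Bool) :
    hamm c₁ c₂ = ∑ g : Fin r, ∑ j : Fin p₂, (if c₁ g j = c₂ g j then 0 else 1) := by
  rw [hamm, card_filter, Fintype.sum_prod_type]
  congr 1; ext g; congr 1; ext j
  by_cases h : c₁ g j = c₂ g j <;> simp [h]

/-- ball bound for hamming balls -/
lemma hamm_ball_bound (m t : ℕ) (hm : m = r * p₂) (c : Fin r → Fin p₂ → Bool) :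
    ((univ : Finset (Fin r → Fin p₂ → Bool)).filter (fun c' => hamm c c' ≤ t)).card
      ≤ (t+1) * m.choose t ∨ 2 * t > m := by
  rcases Nat.lt_or_ge m (2*t) with h | h
  · right; omega
  left
  have hcard_univ : (univ : Finset (Fin r × Fin p₂)).card = m := by
    simp [card_univ, hm]
  have := card_powerset_filter_le (univ : Finset (Fin r × Fin p₂)) t (by omega)
  rw [hcard_univ] at this
  refine le_trans ?_ this
  apply card_le_card_of_injOn
    (fun c' => univ.filter (fun x : Fin r × Fin p₂ => ¬ (c x.1 x.2 = c' x.1 x.2)))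
  · intro c' hc'
    simp only [mem_filter, mem_univ, true_and] at hc' ⊢
    simp only [mem_coe, mem_filter, mem_univ, true_and, mem_powerset] at hc' ⊢
    exact ⟨filter_subset _ _, hc'⟩
  · intro c₁ hc₁ c₂ hc₂ heq
    funext g j
    have h1 : ((g, j) ∈ univ.filter (fun x : Fin r × Fin p₂ => ¬ (c x.1 x.2 = c₁ x.1 x.2)))
        ↔ ((g, j) ∈ univ.filter (fun x : Fin r × Fin p₂ => ¬ (c x.1 x.2 = c₂ x.1 x.2))) := by
      simp only at heq
      rw [heq]
    simp only [mem_filter, mem_univ, true_and] at h1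
    cases hb : c g j <;> cases hb1 : c₁ g j <;> cases hb2 : c₂ g j <;>
      simp_all
end codes

section codeexist
open Finset

/-- Existence of the hypercube code. -/
lemma codeH_exists (r p₂ : ℕ) (hr : 1 ≤ r) (hp₂ : 1 ≤ p₂) :
    ∃ 𝒞 : Finset (Fin r → Fin p₂ → Bool),
      2^(r*p₂) ≤ (((r*p₂-1)/8 + 1) * (r*p₂).choose ((r*p₂-1)/8)) * 𝒞.card ∧
      ∀ c₁ ∈ 𝒞, ∀ c₂ ∈ 𝒞, c₁ ≠ c₂ → r*p₂ ≤ 8 * hamm c₁ c₂ := by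
  classical
  set m := r * p₂ with hm
  have hm1 : 1 ≤ m := by
    rw [hm]; exact Nat.one_le_iff_ne_zero.mpr (by positivity)
  set t := (m-1)/8 with ht
  have h8t : 8 * t ≤ m - 1 := by
    rw [ht, Nat.mul_comm]; exact Nat.div_mul_le_self _ _
  have h2t : 2 * t ≤ m := by omega
  have hballs : ∀ c : Fin r → Fin p₂ → Bool,
      ((univ : Finset (Fin r → Fin p₂ → Bool)).filter (fun c' => 8 * hamm c c' < m)).card
        ≤ (t+1) * m.choose t := by
    intro c
    have hsub : (univ : Finset (Fin r → Fin p₂ → Bool)).filter (fun c' => 8 * hamm c c' < m)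
        ⊆ (univ : Finset (Fin r → Fin p₂ → Bool)).filter (fun c' => hamm c c' ≤ t) := by
      intro x hx
      simp only [mem_filter, mem_univ, true_and] at hx ⊢
      have : hamm c x ≤ (m-1)/8 := (Nat.le_div_iff_mul_le (by norm_num)).mpr (by omega)
      omega
    rcases hamm_ball_bound m t hm c with h | h
    · exact le_trans (card_le_card hsub) h
    · omega
  obtain ⟨C, hCsub, hCcard, hCpair⟩ := greedy_aux
    (fun c₁ c₂ : Fin r → Fin p₂ → Bool => 8 * hamm c₁ c₂ < m)
    (fun x y h => by show 8 * hamm y x < m; rw [hamm_comm]; exact h)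
    ((t+1) * m.choose t) (2^m) univ
    (by
      have : (univ : Finset (Fin r → Fin p₂ → Bool)).card = 2^m := by
        simp [card_univ, hm, pow_mul, mul_comm r p₂]
      omega)
    (fun x _ => by simp [hamm_self]; omega)
    (fun x _ => hballs x)
  refine ⟨C, ?_, ?_⟩
  · have : (univ : Finset (Fin r → Fin p₂ → Bool)).card = 2^m := by
      simp [card_univ, hm, pow_mul, mul_comm r p₂]
    calc 2^m = (univ : Finset (Fin r → Fin p₂ → Bool)).card := this.symm
      _ ≤ (t+1) * m.choose t * C.card := hCcard
  · intro c₁ hc₁ c₂ hc₂ hne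
    have := hCpair c₁ hc₁ c₂ hc₂ hne
    omega
end codeexist

section codeA
open Finset

/-- Existence of the support code. -/
lemma codeA_exists (p₁ k : ℕ) (hk : 1 ≤ k) (hkp : 2*k ≤ p₁) :
    ∃ 𝒮 : Finset (Finset (Fin p₁)),
      (∀ S ∈ 𝒮, S.card = k) ∧
      p₁.choose k ≤ (2^k * (((k-1)/8 + 1) * (p₁ - k).choose ((k-1)/8))) * 𝒮.card ∧
      ∀ S₁ ∈ 𝒮, ∀ S₂ ∈ 𝒮, S₁ ≠ S₂ → k ≤ 8 * (S₁ \ S₂).card := by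
  classical
  set t := (k-1)/8 with ht
  have h8t : 8 * t ≤ k - 1 := by
    rw [ht, Nat.mul_comm]; exact Nat.div_mul_le_self _ _
  set Ω : Finset (Finset (Fin p₁)) := univ.powersetCard k with hΩ
  have hΩcard : Ω.card = p₁.choose k := by
    rw [hΩ, card_powersetCard, card_univ, Fintype.card_fin]
  have hmem : ∀ S ∈ Ω, S.card = k := by
    intro S hS
    rw [hΩ, mem_powersetCard] at hS
    exact hS.2
  -- ball bound
  have hball : ∀ S ∈ Ω,
      (Ω.filter (fun S' => 8 * (S \ S').card < k ∧ 8 * (S' \ S).card < k)).card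
        ≤ 2^k * ((t+1) * (p₁ - k).choose t) := by
    intro S hS
    have hScard := hmem S hS
    have hcompl : (univ \ S).card = p₁ - k := by
      rw [card_sdiff_of_subset (subset_univ S), card_univ, Fintype.card_fin, hScard]
    have h2t : 2 * t ≤ (univ \ S).card := by omega
    have hinj : Set.InjOn (fun S' => (S ∩ S', S' \ S))
        ↑(Ω.filter (fun S' => 8 * (S \ S').card < k ∧ 8 * (S' \ S).card < k)) := by
      intro S₁ h₁ S₂ h₂ heq
      simp only at heq
      have e1 : S ∩ S₁ = S ∩ S₂ := congrArg Prod.fst heq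
      have e2 : S₁ \ S = S₂ \ S := congrArg Prod.snd heq
      have r1 : S₁ = (S ∩ S₁) ∪ (S₁ \ S) := by
        ext a; simp only [mem_union, mem_inter, mem_sdiff]; tauto
      have r2 : S₂ = (S ∩ S₂) ∪ (S₂ \ S) := by
        ext a; simp only [mem_union, mem_inter, mem_sdiff]; tauto
      rw [r1, r2, e1, e2]
    calc (Ω.filter (fun S' => 8 * (S \ S').card < k ∧ 8 * (S' \ S).card < k)).card
        ≤ (S.powerset ×ˢ ((univ \ S).powerset.filter (fun T => T.card ≤ t))).card := by
          apply card_le_card_of_injOn (fun S' => (S ∩ S', S' \ S)) _ hinj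
          intro S' hS'
          simp only [mem_coe, mem_filter] at hS'
          obtain ⟨hS'Ω, h1, h2⟩ := hS'
          simp only [mem_coe, mem_product, mem_powerset, mem_filter]
          refine ⟨inter_subset_left, ⟨?_, ?_⟩⟩
          · intro x hx
            simp only [mem_sdiff] at hx ⊢
            exact ⟨mem_univ x, hx.2⟩
          · exact (Nat.le_div_iff_mul_le (by norm_num)).mpr (by omega)
      _ = S.powerset.card * ((univ \ S).powerset.filter (fun T => T.card ≤ t)).card :=
          card_product _ _
      _ ≤ 2^k * ((t+1) * (p₁ - k).choose t) := by
          apply Nat.mul_le_mul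
          · rw [card_powerset, hScard]
          · have := card_powerset_filter_le (univ \ S) t h2t
            rwa [hcompl] at this
  obtain ⟨C, hCsub, hCcard, hCpair⟩ := greedy_aux
    (fun S₁ S₂ : Finset (Fin p₁) => 8 * (S₁ \ S₂).card < k ∧ 8 * (S₂ \ S₁).card < k)
    (fun x y h => ⟨h.2, h.1⟩)
    (2^k * ((t+1) * (p₁ - k).choose t)) (p₁.choose k) Ω (by omega)
    (fun S _ => by simp; omega)
    hball
  refine ⟨C, fun S hS => hmem S (hCsub hS), by omega, ?_⟩
  intro S₁ h₁ S₂ h₂ hne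
  have hp := hCpair S₁ h₁ S₂ h₂ hne
  -- cards are equal so the two sdiff cards coincide
  have hc₁ := hmem S₁ (hCsub h₁)
  have hc₂ := hmem S₂ (hCsub h₂)
  have hdiff : (S₁ \ S₂).card = (S₂ \ S₁).card := by
    have a1 : (S₁ ∩ S₂).card + (S₁ \ S₂).card = S₁.card := card_inter_add_card_sdiff S₁ S₂
    have a2 : (S₂ ∩ S₁).card + (S₂ \ S₁).card = S₂.card := card_inter_add_card_sdiff S₂ S₁
    rw [inter_comm] at a2
    omega
  push_neg at hp
  rcases Nat.lt_or_ge (8 * (S₁ \ S₂).card) k with h | h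
  · have := hp h; omega
  · omega
end codeA

section buildX
open Finset

def sgnB (b : Bool) : ℝ := if b then 1 else -1

lemma sgnB_sq (b : Bool) : sgnB b ^ 2 = 1 := by cases b <;> simp [sgnB]

lemma sgnB_diff_sq (a : ℝ) (b₁ b₂ : Bool) :
    (a * sgnB b₁ - a * sgnB b₂)^2 = if b₁ = b₂ then 0 else 4 * a^2 := by
  cases b₁ <;> cases b₂ <;> simp [sgnB] <;> ring

variable {p₁ p₂ k r : ℕ}

/-- index of `i` inside `S`. -/
def sIdx (S : Finset (Fin p₁)) (i : Fin p₁) : ℕ := (S.filter (· < i)).card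

def buildX (p₂ : ℕ) (S : Finset (Fin p₁)) (hr : 0 < r) (a : ℝ)
    (c : Fin r → Fin p₂ → Bool) : Matrix (Fin p₁) (Fin p₂) ℝ :=
  Matrix.of fun i j =>
    if i ∈ S then a * sgnB (c ⟨sIdx S i % r, Nat.mod_lt _ hr⟩ j) else 0

lemma sIdx_lt {S : Finset (Fin p₁)} {i : Fin p₁} (hi : i ∈ S) : sIdx S i < S.card := by
  have hsub : S.filter (· < i) ⊆ S.erase i := by
    intro x hx
    simp only [mem_filter] at hx
    exact mem_erase.mpr ⟨ne_of_lt hx.2, hx.1⟩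
  have := card_le_card hsub
  rw [card_erase_of_mem hi] at this
  have hpos : 0 < S.card := card_pos.mpr ⟨i, hi⟩
  unfold sIdx
  omega

lemma sIdx_strictMono {S : Finset (Fin p₁)} {i i' : Fin p₁} (hi : i ∈ S) (hi' : i' ∈ S)
    (h : i < i') : sIdx S i < sIdx S i' := by
  apply card_lt_card
  rw [Finset.ssubset_iff_of_subset]
  · exact ⟨i, by simp [mem_filter, hi, h], by simp⟩
  · intro x hx
    simp only [mem_filter] at hx ⊢
    exact ⟨hx.1, lt_trans hx.2 h⟩

lemma sIdx_injOn (S : Finset (Fin p₁)) : Set.InjOn (sIdx S) ↑S := by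
  intro i hi i' hi' heq
  by_contra hne
  rcases lt_or_gt_of_ne hne with h | h
  · exact absurd heq (ne_of_lt (sIdx_strictMono hi hi' h))
  · exact absurd heq.symm (ne_of_lt (sIdx_strictMono hi' hi h))

lemma sIdx_image (S : Finset (Fin p₁)) : S.image (sIdx S) = range S.card := by
  apply eq_of_subset_of_card_le
  · intro n hn
    simp only [mem_image] at hn
    obtain ⟨i, hi, rfl⟩ := hn
    exact mem_range.mpr (sIdx_lt hi)
  · rw [card_image_of_injOn (sIdx_injOn S), card_range]

lemma sum_sIdx (S : Finset (Fin p₁)) (f : ℕ → ℝ) :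
    ∑ i ∈ S, f (sIdx S i) = ∑ n ∈ range S.card, f n := by
  rw [← sIdx_image S, sum_image (fun x hx y hy h => sIdx_injOn S hx hy h)]

/-- key periodic-sum lower bound -/
lemma sum_mod_ge (kk rr : ℕ) (hr : 0 < rr) (F : ℕ → ℝ) (hper : ∀ n, F n = F (n % rr))
    (hpos : ∀ n, 0 ≤ F n) :
    (↑(kk / rr) : ℝ) * ∑ g ∈ range rr, F g ≤ ∑ n ∈ range kk, F n := by
  have hqr : kk / rr * rr ≤ kk := Nat.div_mul_le_self kk rr
  have step : ∀ q : ℕ, ∑ n ∈ range (q * rr), F n = q * ∑ g ∈ range rr, F g := by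
    intro q
    induction q with
    | zero => simp
    | succ q ihq =>
      have : (q+1) * rr = q * rr + rr := by ring
      rw [this, Finset.sum_range_add, ihq]
      have : ∑ x ∈ range rr, F (q * rr + x) = ∑ g ∈ range rr, F g := by
        apply sum_congr rfl
        intro x hx
        rw [hper (q * rr + x), Nat.mul_add_mod_of_lt (mem_range.mp hx)]
      rw [this]
      push_cast
      ring
  calc (↑(kk / rr) : ℝ) * ∑ g ∈ range rr, F g = ∑ n ∈ range (kk / rr * rr), F n :=
        (step (kk / rr)).symm
    _ ≤ ∑ n ∈ range kk, F n := by
        apply sum_le_sum_of_subset_of_nonneg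
        · exact range_subset_range.mpr hqr
        · intro n _ _; exact hpos n
end buildX

section buildprops
open Finset

variable {p₁ p₂ k r : ℕ}

lemma buildX_row_zero (S : Finset (Fin p₁)) (hr : 0 < r) (a : ℝ) (c : Fin r → Fin p₂ → Bool)
    {i : Fin p₁} (hi : i ∉ S) : buildX p₂ S hr a c i = 0 := by
  funext j
  simp [buildX, hi]

lemma rowSparsity_buildX (S : Finset (Fin p₁)) (hr : 0 < r) (a : ℝ)
    (c : Fin r → Fin p₂ → Bool) : rowSparsity (buildX p₂ S hr a c) ≤ S.card := by
  have hsub : {i | buildX p₂ S hr a c i ≠ 0} ⊆ ↑S := by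
    intro i hi
    by_contra h
    exact hi (buildX_row_zero S hr a c h)
  calc rowSparsity (buildX p₂ S hr a c) ≤ (↑S : Set (Fin p₁)).ncard :=
        Set.ncard_le_ncard hsub S.finite_toSet
    _ = S.card := Set.ncard_coe_finset S

lemma rank_buildX (S : Finset (Fin p₁)) (hr : 0 < r) (a : ℝ)
    (c : Fin r → Fin p₂ → Bool) : (buildX p₂ S hr a c).rank ≤ r := by
  set P : Matrix (Fin p₁) (Fin r) ℝ :=
    Matrix.of fun i g => if i ∈ S ∧ g = (⟨sIdx S i % r, Nat.mod_lt _ hr⟩ : Fin r) then 1 else 0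
    with hP
  set Q : Matrix (Fin r) (Fin p₂) ℝ := Matrix.of fun g j => a * sgnB (c g j) with hQ
  have hfact : buildX p₂ S hr a c = P * Q := by
    ext i j
    rw [Matrix.mul_apply]
    by_cases hi : i ∈ S
    · simp only [buildX, Matrix.of_apply, hi, if_true, hP, hQ, hi, true_and, ite_mul, one_mul,
        zero_mul]
      rw [Finset.sum_ite_eq' univ (⟨sIdx S i % r, Nat.mod_lt _ hr⟩ : Fin r)
        (fun g => a * sgnB (c g j))]
      simp
    · simp [buildX, hi, hP]
  rw [hfact]
  refine le_trans (Matrix.rank_mul_le_right P Q) (le_trans Q.rank_le_card_height ?_)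
  simp

lemma rowsq_buildX (S : Finset (Fin p₁)) (hr : 0 < r) (a : ℝ)
    (c : Fin r → Fin p₂ → Bool) {i : Fin p₁} (hi : i ∈ S) :
    ∑ j, (buildX p₂ S hr a c i j)^2 = p₂ * a^2 := by
  have : ∀ j, (buildX p₂ S hr a c i j)^2 = a^2 := by
    intro j
    simp [buildX, hi, mul_pow, sgnB_sq]
  rw [Finset.sum_congr rfl (fun j _ => this j)]
  simp [Finset.sum_const, card_univ, mul_comm]

lemma frobSq_buildX (S : Finset (Fin p₁)) (hr : 0 < r) (a : ℝ)
    (c : Fin r → Fin p₂ → Bool) :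
    ∑ i, ∑ j, (buildX p₂ S hr a c i j)^2 = S.card * (p₂ * a^2) := by
  have hterm : ∀ i, ∑ j, (buildX p₂ S hr a c i j)^2
      = if i ∈ S then (p₂ : ℝ) * a^2 else 0 := by
    intro i
    by_cases hi : i ∈ S
    · rw [if_pos hi, rowsq_buildX S hr a c hi]
    · rw [if_neg hi]
      apply Finset.sum_eq_zero
      intro j _
      simp [buildX, hi]
  rw [Finset.sum_congr rfl (fun i _ => hterm i), Finset.sum_ite_mem, univ_inter,
    Finset.sum_const]
  simp [mul_comm]

/-- distance bound when supports differ -/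
lemma frobSq_diff_supports (S₁ S₂ : Finset (Fin p₁)) (hr : 0 < r) (a : ℝ)
    (c₁ c₂ : Fin r → Fin p₂ → Bool) :
    (((S₁ \ S₂).card + (S₂ \ S₁).card : ℕ) : ℝ) * (p₂ * a^2) ≤
      ∑ i, ∑ j, (buildX p₂ S₁ hr a c₁ i j - buildX p₂ S₂ hr a c₂ i j)^2 := by
  set X₁ := buildX p₂ S₁ hr a c₁ with hX₁
  set X₂ := buildX p₂ S₂ hr a c₂ with hX₂
  have hf1 : ∀ i ∈ S₁ \ S₂, ∑ j, (X₁ i j - X₂ i j)^2 = p₂ * a^2 := by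
    intro i hi
    rw [mem_sdiff] at hi
    have h2 : X₂ i = 0 := buildX_row_zero S₂ hr a c₂ hi.2
    have : ∀ j, (X₁ i j - X₂ i j)^2 = (X₁ i j)^2 := by
      intro j
      have : X₂ i j = 0 := by rw [h2]; rfl
      rw [this, sub_zero]
    rw [Finset.sum_congr rfl (fun j _ => this j)]
    exact rowsq_buildX S₁ hr a c₁ hi.1
  have hf2 : ∀ i ∈ S₂ \ S₁, ∑ j, (X₁ i j - X₂ i j)^2 = p₂ * a^2 := by
    intro i hi
    rw [mem_sdiff] at hi
    have h1 : X₁ i = 0 := buildX_row_zero S₁ hr a c₁ hi.2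
    have : ∀ j, (X₁ i j - X₂ i j)^2 = (X₂ i j)^2 := by
      intro j
      have h1j : X₁ i j = 0 := by rw [h1]; rfl
      rw [h1j, zero_sub, neg_sq]
    rw [Finset.sum_congr rfl (fun j _ => this j)]
    exact rowsq_buildX S₂ hr a c₂ hi.1
  have hdisj : Disjoint (S₁ \ S₂) (S₂ \ S₁) := disjoint_sdiff_sdiff
  calc (((S₁ \ S₂).card + (S₂ \ S₁).card : ℕ) : ℝ) * (p₂ * a^2)
      = ∑ i ∈ (S₁ \ S₂) ∪ (S₂ \ S₁), ∑ j, (X₁ i j - X₂ i j)^2 := by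
        rw [Finset.sum_union hdisj]
        rw [Finset.sum_congr rfl hf1, Finset.sum_congr rfl hf2]
        simp [Finset.sum_const]
        push_cast
        ring
    _ ≤ ∑ i, ∑ j, (X₁ i j - X₂ i j)^2 := by
        apply Finset.sum_le_sum_of_subset_of_nonneg (subset_univ _)
        intro i _ _
        exact Finset.sum_nonneg (fun j _ => sq_nonneg _)

/-- distance bound for equal supports -/
lemma frobSq_diff_same (S : Finset (Fin p₁)) (hr : 0 < r) (a : ℝ)
    (c₁ c₂ : Fin r → Fin p₂ → Bool) :
    (↑(S.card / r) : ℝ) * ((hamm c₁ c₂ : ℝ) * (4 * a^2)) ≤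
      ∑ i, ∑ j, (buildX p₂ S hr a c₁ i j - buildX p₂ S hr a c₂ i j)^2 := by
  set X₁ := buildX p₂ S hr a c₁ with hX₁
  set X₂ := buildX p₂ S hr a c₂ with hX₂
  set F : ℕ → ℝ := fun n =>
    ∑ j, (if c₁ (⟨n % r, Nat.mod_lt _ hr⟩ : Fin r) j = c₂ (⟨n % r, Nat.mod_lt _ hr⟩ : Fin r) j
      then (0:ℝ) else 4 * a^2) with hF
  have hFpos : ∀ n, 0 ≤ F n := by
    intro n
    apply Finset.sum_nonneg
    intro j _
    split
    · exact le_rfl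
    · positivity
  have hterm : ∀ i, ∑ j, (X₁ i j - X₂ i j)^2 = if i ∈ S then F (sIdx S i) else 0 := by
    intro i
    by_cases hi : i ∈ S
    · rw [if_pos hi]
      apply Finset.sum_congr rfl
      intro j _
      have e1 : X₁ i j = a * sgnB (c₁ (⟨sIdx S i % r, Nat.mod_lt _ hr⟩ : Fin r) j) := by
        simp [hX₁, buildX, hi]
      have e2 : X₂ i j = a * sgnB (c₂ (⟨sIdx S i % r, Nat.mod_lt _ hr⟩ : Fin r) j) := by
        simp [hX₂, buildX, hi]
      rw [e1, e2, sgnB_diff_sq]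
    · rw [if_neg hi]
      apply Finset.sum_eq_zero
      intro j _
      have e1 : X₁ i = 0 := buildX_row_zero S hr a c₁ hi
      have e2 : X₂ i = 0 := buildX_row_zero S hr a c₂ hi
      rw [e1, e2]
      simp
  have hper : ∀ n, F n = F (n % r) := by
    intro n
    have hmm : n % r % r = n % r := Nat.mod_mod_of_dvd n (dvd_refl r)
    simp only [hF, hmm]
  have hrange : ∑ g ∈ range r, F g = (hamm c₁ c₂ : ℝ) * (4 * a^2) := by
    rw [← Fin.sum_univ_eq_sum_range F r]
    have hgF : ∀ g : Fin r, F g.val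
        = ∑ j, (if c₁ g j = c₂ g j then (0:ℝ) else 4 * a^2) := by
      intro g
      have hmk : (⟨g.val % r, Nat.mod_lt _ hr⟩ : Fin r) = g :=
        Fin.ext (Nat.mod_eq_of_lt g.isLt)
      simp only [hF, hmk]
    rw [Finset.sum_congr rfl (fun g _ => hgF g), hamm_eq_sum]
    push_cast
    rw [Finset.sum_mul]
    apply Finset.sum_congr rfl
    intro g _
    rw [Finset.sum_mul]
    apply Finset.sum_congr rfl
    intro j _
    split <;> ring
  calc (↑(S.card / r) : ℝ) * ((hamm c₁ c₂ : ℝ) * (4 * a^2))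
      = (↑(S.card / r) : ℝ) * ∑ g ∈ range r, F g := by rw [hrange]
    _ ≤ ∑ n ∈ range S.card, F n := sum_mod_ge S.card r hr F hper hFpos
    _ = ∑ i ∈ S, F (sIdx S i) := (sum_sIdx S F).symm
    _ = ∑ i, (if i ∈ S then F (sIdx S i) else 0) := by
        rw [Finset.sum_ite_mem, univ_inter]
    _ = ∑ i, ∑ j, (X₁ i j - X₂ i j)^2 :=
        (Finset.sum_congr rfl (fun i _ => hterm i)).symm
end buildprops

section logbounds
open Finset Real

lemma NS_pos {p₁ k NS B : ℕ} (hkp : k ≤ p₁) (h : p₁.choose k ≤ B * NS) : 1 ≤ NS := by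
  rcases Nat.eq_zero_or_pos NS with h0 | h1
  · rw [h0, Nat.mul_zero] at h
    have := Nat.choose_pos hkp
    omega
  · exact h1

lemma logA_bound (p₁ k NS : ℕ) (hk : 1 ≤ k) (hp : 100 * k ≤ p₁)
    (hcount : p₁.choose k ≤ (2^k * (((k-1)/8 + 1) * (p₁ - k).choose ((k-1)/8))) * NS) :
    (4/25 : ℝ) * k * Real.log (p₁ / k) ≤ Real.log NS := by
  set t := (k-1)/8 with ht
  set d := k - t with hd
  have h8t : 8 * t ≤ k - 1 := by
    rw [ht, Nat.mul_comm]; exact Nat.div_mul_le_self _ _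
  have htk : t < k := by omega
  have htd : t + d = k := by omega
  have hkp₁ : k ≤ p₁ := by omega
  have hNS : 1 ≤ NS := NS_pos hkp₁ hcount
  -- nat chain
  have f2 : (p₁ - k).choose t ≤ p₁.choose t := Nat.choose_le_choose t (Nat.sub_le _ _)
  have f3 : p₁.choose t * (p₁ - k + 1)^d ≤ p₁.choose k * k^d :=
    choose_ratio hkp₁ d t htd
  have hcpos : 0 < p₁.choose t := Nat.choose_pos (by omega)
  have N1 : (p₁ - k + 1)^d ≤ 2^k * ((t+1) * (k^d * NS)) := by
    have c1 : p₁.choose t * (p₁ - k + 1)^d ≤ p₁.choose t * (2^k * ((t+1) * (k^d * NS))) := by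
      calc p₁.choose t * (p₁ - k + 1)^d ≤ p₁.choose k * k^d := f3
        _ ≤ ((2^k * (((k-1)/8 + 1) * (p₁ - k).choose ((k-1)/8))) * NS) * k^d :=
            Nat.mul_le_mul_right _ hcount
        _ = 2^k * ((t+1) * ((p₁ - k).choose t * (NS * k^d))) := by rw [← ht]; ring
        _ ≤ 2^k * ((t+1) * (p₁.choose t * (NS * k^d))) := by
            apply Nat.mul_le_mul_left
            apply Nat.mul_le_mul_left
            exact Nat.mul_le_mul_right _ f2
        _ = p₁.choose t * (2^k * ((t+1) * (k^d * NS))) := by ring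
    exact Nat.le_of_mul_le_mul_left c1 hcpos
  -- positivity facts
  have hk0R : (0:ℝ) < k := by exact_mod_cast hk
  have hNS0 : (0:ℝ) < NS := by exact_mod_cast hNS
  have hp₁0 : (0:ℝ) < p₁ := by
    have : 1 ≤ p₁ := by omega
    exact_mod_cast this
  -- real chain
  have hreal : ((p₁ - k + 1 : ℕ) : ℝ)^d ≤ (2:ℝ)^k * (((t:ℝ)+1) * ((k:ℝ)^d * (NS:ℝ))) := by
    exact_mod_cast N1
  have hlhs_pos : (0:ℝ) < ((p₁ - k + 1 : ℕ) : ℝ)^d := by positivity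
  have hlog := Real.log_le_log hlhs_pos hreal
  rw [Real.log_pow, Real.log_mul (by positivity) (mul_pos (by positivity)
        (mul_pos (pow_pos hk0R d) hNS0)).ne',
      Real.log_mul (by positivity) (mul_pos (pow_pos hk0R d) hNS0).ne',
      Real.log_mul (pow_pos hk0R d).ne' hNS0.ne',
      Real.log_pow, Real.log_pow] at hlog
  -- hlog : d * log (p₁-k+1) ≤ k * log 2 + (log (t+1) + (d * log k + log NS))
  have hLsplit : Real.log ((p₁:ℝ) / k) = Real.log p₁ - Real.log k :=
    Real.log_div hp₁0.ne' hk0R.ne'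
  have hcast_sub : ((p₁ - k + 1 : ℕ) : ℝ) = (p₁:ℝ) - k + 1 := by
    push_cast [hkp₁]; ring
  have hk100 : (100:ℝ) * k ≤ p₁ := by exact_mod_cast hp
  have hfrac : (99/100 : ℝ) * p₁ ≤ ((p₁ - k + 1 : ℕ) : ℝ) := by
    rw [hcast_sub]; linarith
  have hlog99 : Real.log (100/99 : ℝ) ≤ 1/99 := by
    have := Real.log_le_sub_one_of_pos (x := (100/99 : ℝ)) (by norm_num)
    linarith
  have hlogp : Real.log ((p₁ - k + 1 : ℕ) : ℝ) ≥ Real.log p₁ - 1/99 := by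
    have h1 : Real.log ((99/100 : ℝ) * p₁) ≤ Real.log ((p₁ - k + 1 : ℕ) : ℝ) :=
      Real.log_le_log (by positivity) hfrac
    rw [Real.log_mul (by norm_num) hp₁0.ne'] at h1
    have h2 : Real.log (99/100 : ℝ) = - Real.log (100/99 : ℝ) := by
      rw [← Real.log_inv]; norm_num
    linarith
  have hdlb : (7:ℝ) * k / 8 ≤ (d:ℝ) := by
    have hdk : (d:ℝ) = (k:ℝ) - (t:ℝ) := by
      rw [hd]; push_cast [htk.le]; ring
    have ht8 : (8:ℝ) * t ≤ (k:ℝ) - 1 := by exact_mod_cast h8t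
    linarith
  have hlogt : Real.log ((t:ℝ)+1) ≤ (k:ℝ)/8 := by
    have := Real.log_le_sub_one_of_pos (x := (t:ℝ)+1) (by positivity)
    have ht8 : (8:ℝ) * t ≤ (k:ℝ) - 1 := by exact_mod_cast h8t
    linarith
  have hlog2_lb : (0.6931471803 : ℝ) < Real.log 2 := Real.log_two_gt_d9
  have hlog2_ub : Real.log 2 < 0.6931471808 := Real.log_two_lt_d9
  have hLlb : 6 * Real.log 2 ≤ Real.log ((p₁:ℝ) / k) := by
    have h64 : (64:ℝ) ≤ (p₁:ℝ)/k := by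
      rw [le_div_iff₀ hk0R]
      nlinarith
    have h2 : Real.log ((2:ℝ)^6) ≤ Real.log ((p₁:ℝ)/k) := by
      apply Real.log_le_log (by positivity)
      norm_num
      linarith
    rwa [Real.log_pow] at h2
  -- combine
  set L : ℝ := Real.log ((p₁:ℝ) / k)
  have hL199 : (0:ℝ) ≤ L - 1/99 := by linarith
  have h1 : L - 1/99 ≤ Real.log ((p₁ - k + 1 : ℕ):ℝ) - Real.log k := by
    rw [hLsplit]; linarith
  have hd0 : (0:ℝ) ≤ d := Nat.cast_nonneg d
  have hmain : (d:ℝ) * (L - 1/99) ≤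
      (d:ℝ) * (Real.log ((p₁ - k + 1 : ℕ):ℝ) - Real.log k) :=
    mul_le_mul_of_nonneg_left h1 hd0
  have hstep : (7 * (k:ℝ) / 8) * (L - 1/99) ≤ (d:ℝ) * (L - 1/99) :=
    mul_le_mul_of_nonneg_right hdlb hL199
  have hfinal : (7 * (k:ℝ) / 8) * (L - 1/99) - (k:ℝ) * Real.log 2 - (k:ℝ)/8 ≤ Real.log NS := by
    linarith [hlog, hmain, hstep, hlogt]
  have hk0 : (0:ℝ) ≤ k := Nat.cast_nonneg k
  have key : (4/25:ℝ) * L ≤ (7:ℝ)/8 * (L - 1/99) - Real.log 2 - 1/8 := by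
    linarith
  calc (4/25 : ℝ) * k * L = (k:ℝ) * ((4/25:ℝ) * L) := by ring
    _ ≤ (k:ℝ) * ((7:ℝ)/8 * (L - 1/99) - Real.log 2 - 1/8) :=
        mul_le_mul_of_nonneg_left key hk0
    _ = (7 * (k:ℝ) / 8) * (L - 1/99) - (k:ℝ) * Real.log 2 - (k:ℝ)/8 := by ring
    _ ≤ Real.log NS := hfinal

lemma logB_bound (r p₂ NC : ℕ) (hr : 1 ≤ r) (hp₂ : 1 ≤ p₂)
    (hcount : 2^(r*p₂) ≤ (((r*p₂-1)/8 + 1) * (r*p₂).choose ((r*p₂-1)/8)) * NC) :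
    (3/25 : ℝ) * r * p₂ ≤ Real.log NC := by
  set m := r * p₂ with hm
  have hm1 : 1 ≤ m := by
    rw [hm]; exact Nat.one_le_iff_ne_zero.mpr (by positivity)
  set t := (m-1)/8 with ht
  have h8t : 8 * t ≤ m - 1 := by
    rw [ht, Nat.mul_comm]; exact Nat.div_mul_le_self _ _
  have htm : t ≤ m := by omega
  have hNC : 1 ≤ NC := by
    rcases Nat.eq_zero_or_pos NC with h0 | h1
    · rw [h0, Nat.mul_zero] at hcount
      have : 0 < 2^m := by positivity
      omega
    · exact h1
  have hNC0 : (0:ℝ) < (NC:ℝ) := by exact_mod_cast hNC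
  have hchoose_pos : 0 < m.choose t := Nat.choose_pos htm
  have hreal : (2:ℝ)^m ≤ (((t:ℝ)+1) * (m.choose t : ℝ)) * NC := by
    have h0 : ((2^m : ℕ):ℝ) ≤ ((((m-1)/8 + 1) * m.choose ((m-1)/8) * NC : ℕ) : ℝ) := by
      exact_mod_cast hcount
    push_cast at h0
    rw [← ht] at h0
    linarith [h0]
  have hreal2 : (2:ℝ)^m ≤ (((t:ℝ)+1) * ((8:ℝ)^t * (9/8:ℝ)^m)) * NC := by
    calc (2:ℝ)^m ≤ (((t:ℝ)+1) * (m.choose t : ℝ)) * NC := hreal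
      _ ≤ (((t:ℝ)+1) * ((8:ℝ)^t * (9/8:ℝ)^m)) * NC := by
          apply mul_le_mul_of_nonneg_right _ hNC0.le
          apply mul_le_mul_of_nonneg_left (choose_real_bound htm) (by positivity)
  have hlog := Real.log_le_log (by positivity) hreal2
  rw [Real.log_pow, Real.log_mul (by positivity) hNC0.ne',
      Real.log_mul (by positivity) (by positivity),
      Real.log_mul (by positivity) (by positivity), Real.log_pow, Real.log_pow] at hlog
  have hlogt : Real.log ((t:ℝ)+1) ≤ (m:ℝ)/8 := by
    have := Real.log_le_sub_one_of_pos (x := (t:ℝ)+1) (by positivity)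
    have ht8 : (8:ℝ) * t ≤ (m:ℝ) - 1 := by exact_mod_cast h8t
    linarith
  have hlog8 : Real.log (8:ℝ) = 3 * Real.log 2 := by
    rw [show (8:ℝ) = 2^3 by norm_num, Real.log_pow]
    push_cast; ring
  have hlog98 : Real.log (9/8 : ℝ) ≤ 1/8 := by
    have := Real.log_le_sub_one_of_pos (x := (9/8 : ℝ)) (by norm_num)
    linarith
  have ht8 : (8:ℝ) * t ≤ (m:ℝ) - 1 := by exact_mod_cast h8t
  have hlog2_lb : (0.6931471803 : ℝ) < Real.log 2 := Real.log_two_gt_d9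
  have hlog2_nonneg : (0:ℝ) ≤ Real.log 2 := by linarith
  have hm0 : (1:ℝ) ≤ (m:ℝ) := by exact_mod_cast hm1
  have htlog8 : (t:ℝ) * Real.log 8 ≤ ((m:ℝ)/8) * (3 * Real.log 2) := by
    rw [hlog8]
    apply mul_le_mul_of_nonneg_right _ (by linarith)
    linarith
  have hgoal : (3/25 : ℝ) * m ≤ Real.log NC := by
    nlinarith [hlog, hlogt, hlog98, htlog8, hlog2_lb, hm0]
  have hcast : ((m:ℕ):ℝ) = (r:ℝ) * p₂ := by rw [hm]; push_cast; ring
  calc (3/25:ℝ) * r * p₂ = (3/25:ℝ) * m := by rw [hcast]; ring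
    _ ≤ Real.log NC := hgoal
end logbounds

section main
open Finset

set_option maxHeartbeats 2000000 in
theorem packing_set_row_partition' :
    ∃ c' : ℝ, 0 < c' ∧ c' < 1 ∧
    ∀ (p₁ p₂ k r : ℕ), 1 ≤ r → r ≤ k → (k : ℝ) ≤ c' * p₁ → r ≤ p₂ →
    ∀ ε : ℝ, 0 < ε →
    ∃ 𝕏' : Finset (Matrix (Fin p₁) (Fin p₂) ℝ),
      (∀ X ∈ 𝕏', rowSparsity X ≤ k ∧ X.rank ≤ r ∧ frobNorm X = ε) ∧
      Real.log 𝕏'.card ≥ (4 / 25) * k * Real.log (p₁ / k) + (3 / 25) * r * p₂ ∧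
      ∀ X₁ ∈ 𝕏', ∀ X₂ ∈ 𝕏', X₁ ≠ X₂ → frobNorm (X₁ - X₂) ≥ ε / 2 := by
  classical
  refine ⟨1/100, by norm_num, by norm_num, ?_⟩
  intro p₁ p₂ k r hr₁ hrk hkp hp₂ ε hε
  have hk1 : 1 ≤ k := le_trans hr₁ hrk
  have hr0 : 0 < r := hr₁
  have hp100 : 100 * k ≤ p₁ := by
    have h1 : ((100 * k : ℕ) : ℝ) ≤ (p₁:ℝ) := by push_cast; linarith
    exact_mod_cast h1
  have h2k : 2 * k ≤ p₁ := by omega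
  have hkp₁ : k ≤ p₁ := by omega
  obtain ⟨𝒮, h𝒮card, h𝒮count, h𝒮sep⟩ := codeA_exists p₁ k hk1 h2k
  obtain ⟨𝒞, h𝒞count, h𝒞sep⟩ := codeH_exists r p₂ hr₁ (le_trans hr₁ hp₂)
  -- scale
  have hk0R : (0:ℝ) < k := by exact_mod_cast hk1
  have hp₂0R : (0:ℝ) < p₂ := by exact_mod_cast le_trans hr₁ hp₂
  have hr0R : (0:ℝ) < r := by exact_mod_cast hr₁
  set a : ℝ := ε / Real.sqrt (k * p₂) with ha
  have hkp₂pos : (0:ℝ) < (k:ℝ) * p₂ := mul_pos hk0R hp₂0R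
  have ha0 : 0 < a := div_pos hε (Real.sqrt_pos.mpr hkp₂pos)
  have hsq : (k : ℝ) * (p₂:ℝ) * a^2 = ε^2 := by
    rw [ha, div_pow, Real.sq_sqrt hkp₂pos.le]
    field_simp
  -- the map
  set f : Finset (Fin p₁) × (Fin r → Fin p₂ → Bool) → Matrix (Fin p₁) (Fin p₂) ℝ :=
    fun Sc => buildX p₂ Sc.1 hr0 a Sc.2 with hfdef
  set 𝕏' := (𝒮 ×ˢ 𝒞).image f with h𝕏
  -- separation for distinct parameter pairs
  have hsep : ∀ Sc₁ ∈ 𝒮 ×ˢ 𝒞, ∀ Sc₂ ∈ 𝒮 ×ˢ 𝒞, Sc₁ ≠ Sc₂ →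
      ε/2 ≤ frobNorm (f Sc₁ - f Sc₂) := by
    rintro ⟨S₁, c₁⟩ h₁ ⟨S₂, c₂⟩ h₂ hne
    rw [mem_product] at h₁ h₂
    have hkey : (ε/2)^2 ≤ ∑ i, ∑ j, ((f (S₁,c₁) - f (S₂,c₂)) i j)^2 := by
      have hentry : ∀ i j, (f (S₁,c₁) - f (S₂,c₂)) i j
          = buildX p₂ S₁ hr0 a c₁ i j - buildX p₂ S₂ hr0 a c₂ i j := fun i j => rfl
      by_cases hS : S₁ = S₂
      · -- same support, different sign patterns
        subst hS
        have hc : c₁ ≠ c₂ := by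
          intro h; exact hne (by rw [h])
        have hham : r * p₂ ≤ 8 * hamm c₁ c₂ := h𝒞sep c₁ h₁.2 c₂ h₂.2 hc
        have hbound := frobSq_diff_same S₁ hr0 a c₁ c₂
        have hcardS : S₁.card = k := h𝒮card S₁ h₁.1
        rw [hcardS] at hbound
        -- numeric facts
        have hq : (k:ℝ) ≤ 2 * r * ((k / r : ℕ):ℝ) := by
          have hmod := Nat.div_add_mod k r
          have hmlt : k % r < r := Nat.mod_lt _ hr0
          have hq1 : 1 ≤ k / r := (Nat.one_le_div_iff hr0).mpr hrk
          have hle : r ≤ r * (k / r) := Nat.le_mul_of_pos_right r hq1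
          have : k ≤ 2 * (r * (k / r)) := by omega
          have := (Nat.cast_le (α := ℝ)).mpr this
          push_cast at this
          linarith
        have hH : (r:ℝ) * p₂ ≤ 8 * (hamm c₁ c₂ : ℝ) := by exact_mod_cast hham
        have hq0 : (0:ℝ) ≤ ((k / r : ℕ):ℝ) := Nat.cast_nonneg _
        have hH0 : (0:ℝ) ≤ (hamm c₁ c₂ : ℝ) := Nat.cast_nonneg _
        have ha20 : (0:ℝ) < a^2 := by positivity
        -- (ε/2)^2 = k p₂ a² / 4 ≤ (k/r) * (H * 4a²)
        have hε2 : (ε/2)^2 = (k:ℝ) * p₂ * a^2 / 4 := by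
          rw [div_pow, ← hsq]; norm_num
        have hchain : (k:ℝ) * p₂ * a^2 / 4 ≤ ((k / r : ℕ):ℝ) * ((hamm c₁ c₂ : ℝ) * (4 * a^2)) := by
          nlinarith [mul_le_mul_of_nonneg_left hH hq0, mul_pos hk0R hp₂0R,
            mul_le_mul_of_nonneg_right hq (mul_nonneg hp₂0R.le ha20.le)]
        calc (ε/2)^2 = (k:ℝ) * p₂ * a^2 / 4 := hε2
          _ ≤ ((k / r : ℕ):ℝ) * ((hamm c₁ c₂ : ℝ) * (4 * a^2)) := hchain
          _ ≤ ∑ i, ∑ j, (buildX p₂ S₁ hr0 a c₁ i j - buildX p₂ S₁ hr0 a c₂ i j)^2 := hbound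
          _ = ∑ i, ∑ j, ((f (S₁,c₁) - f (S₁,c₂)) i j)^2 := by
              apply Finset.sum_congr rfl; intro i _
              apply Finset.sum_congr rfl; intro j _
              rw [hentry]
      · -- different supports
        have hd1 : k ≤ 8 * (S₁ \ S₂).card := h𝒮sep S₁ h₁.1 S₂ h₂.1 hS
        have hd2 : k ≤ 8 * (S₂ \ S₁).card := h𝒮sep S₂ h₂.1 S₁ h₁.1 (Ne.symm hS)
        have hbound := frobSq_diff_supports S₁ S₂ hr0 a c₁ c₂
        have hd1R : (k:ℝ) ≤ 8 * ((S₁ \ S₂).card : ℝ) := by exact_mod_cast hd1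
        have hd2R : (k:ℝ) ≤ 8 * ((S₂ \ S₁).card : ℝ) := by exact_mod_cast hd2
        have hcast : (((S₁ \ S₂).card + (S₂ \ S₁).card : ℕ) : ℝ)
            = ((S₁ \ S₂).card : ℝ) + ((S₂ \ S₁).card : ℝ) := by push_cast; ring
        have hpa : (0:ℝ) ≤ (p₂:ℝ) * a^2 := by positivity
        have hε2 : (ε/2)^2 = (k:ℝ) * p₂ * a^2 / 4 := by
          rw [div_pow, ← hsq]; norm_num
        calc (ε/2)^2 = (k:ℝ) * p₂ * a^2 / 4 := hε2
          _ ≤ (((S₁ \ S₂).card + (S₂ \ S₁).card : ℕ) : ℝ) * ((p₂:ℝ) * a^2) := by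
              rw [hcast]
              nlinarith [mul_le_mul_of_nonneg_right (add_le_add hd1R hd2R) hpa]
          _ ≤ ∑ i, ∑ j, (buildX p₂ S₁ hr0 a c₁ i j - buildX p₂ S₂ hr0 a c₂ i j)^2 := hbound
          _ = ∑ i, ∑ j, ((f (S₁,c₁) - f (S₂,c₂)) i j)^2 := by
              apply Finset.sum_congr rfl; intro i _
              apply Finset.sum_congr rfl; intro j _
              rw [hentry]
    -- conclude via sqrt
    have hmono := Real.sqrt_le_sqrt hkey
    rw [Real.sqrt_sq (by positivity : (0:ℝ) ≤ ε/2)] at hmono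
    exact hmono
  -- injectivity on the parameter set
  have hinj : Set.InjOn f ↑(𝒮 ×ˢ 𝒞) := by
    intro x hx y hy hxy
    by_contra hne
    have h := hsep x (by exact_mod_cast hx) y (by exact_mod_cast hy) hne
    rw [hxy, sub_self] at h
    have : frobNorm (0 : Matrix (Fin p₁) (Fin p₂) ℝ) = 0 := by
      simp [frobNorm]
    rw [this] at h
    linarith
  have hcard : 𝕏'.card = 𝒮.card * 𝒞.card := by
    rw [h𝕏, card_image_of_injOn hinj, card_product]
  refine ⟨𝕏', ?_, ?_, ?_⟩
  · -- property (i)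
    intro X hX
    rw [h𝕏, mem_image] at hX
    obtain ⟨⟨S, c⟩, hSc, rfl⟩ := hX
    rw [mem_product] at hSc
    have hScard : S.card = k := h𝒮card S hSc.1
    refine ⟨?_, ?_, ?_⟩
    · have := rowSparsity_buildX S hr0 a c
      rw [hScard] at this
      exact this
    · exact rank_buildX S hr0 a c
    · show frobNorm (buildX p₂ S hr0 a c) = ε
      rw [frobNorm, frobSq_buildX S hr0 a c, hScard]
      have : (k:ℝ) * ((p₂:ℝ) * a^2) = ε^2 := by rw [← hsq]; ring
      rw [this, Real.sqrt_sq hε.le]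
  · -- property (ii): cardinality bound
    have h𝒮pos : 1 ≤ 𝒮.card := NS_pos hkp₁ h𝒮count
    have h𝒞pos : 1 ≤ 𝒞.card := by
      rcases Nat.eq_zero_or_pos 𝒞.card with h0 | h1
      · rw [h0, Nat.mul_zero] at h𝒞count
        have : 0 < 2^(r*p₂) := by positivity
        omega
      · exact h1
    have hA := logA_bound p₁ k 𝒮.card hk1 hp100 h𝒮count
    have hB := logB_bound r p₂ 𝒞.card hr₁ (le_trans hr₁ hp₂) h𝒞count
    have h𝒮0R : (0:ℝ) < (𝒮.card : ℝ) := by exact_mod_cast h𝒮pos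
    have h𝒞0R : (0:ℝ) < (𝒞.card : ℝ) := by exact_mod_cast h𝒞pos
    rw [ge_iff_le, hcard]
    have hlogmul : Real.log ((𝒮.card * 𝒞.card : ℕ) : ℝ)
        = Real.log (𝒮.card : ℝ) + Real.log (𝒞.card : ℝ) := by
      rw [Nat.cast_mul]
      exact Real.log_mul h𝒮0R.ne' h𝒞0R.ne'
    rw [hlogmul]
    linarith
  · -- property (iii)
    intro X₁ hX₁ X₂ hX₂ hne
    rw [h𝕏, mem_image] at hX₁ hX₂
    obtain ⟨Sc₁, hSc₁, rfl⟩ := hX₁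
    obtain ⟨Sc₂, hSc₂, rfl⟩ := hX₂
    have hpne : Sc₁ ≠ Sc₂ := by
      intro h; exact hne (by rw [h])
    exact hsep Sc₁ hSc₁ Sc₂ hSc₂ hpne
end main


/-- existence of the packing set 𝕏′. -/
theorem packing_set_row_partition :
    ∃ c' : ℝ, 0 < c' ∧ c' < 1 ∧
    ∀ (p₁ p₂ k r : ℕ), 1 ≤ r → r ≤ k → (k : ℝ) ≤ c' * p₁ → r ≤ p₂ →
    ∀ ε : ℝ, 0 < ε →
    ∃ 𝕏' : Finset (Matrix (Fin p₁) (Fin p₂) ℝ),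
      (∀ X ∈ 𝕏', rowSparsity X ≤ k ∧ X.rank ≤ r ∧ frobNorm X = ε) ∧
      Real.log 𝕏'.card ≥ (4 / 25) * k * Real.log (p₁ / k) + (3 / 25) * r * p₂ ∧
      ∀ X₁ ∈ 𝕏', ∀ X₂ ∈ 𝕏', X₁ ≠ X₂ → frobNorm (X₁ - X₂) ≥ ε / 2 := by
  exact packing_set_row_partition'
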